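/- The distribution of the step-up rejection number for i.i.d. p-values: if p₁,...,pₘ are i.i.d. with continuous increasing c.d.f. G and t is a nondecreasing threshold, then for 0 ≤ k ≤ m, P(|SU(t)| = k) = C(m,k)(G(tₖ))^k Ψ_{m−k}(1−G(tₘ), 1−G(t_{m−1}), ..., 1−G(t_{k+1})), where Ψⱼ is the joint c.d.f. of order statistics of j i.i.d. uniform variables (with (G(t₀))⁰ = 1 when k = 0). -/

import Mathlib

open MeasureTheory Finset
open scoped Classical

noncomputable def unifM : Measure ℝ := volume.restrict (Set.Ioo (0:ℝ) 1)

noncomputable def iidUnif (k : ℕ) : Measure (Fin k → ℝ) := Measure.pi fun _ => unifM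

/-- `Psi k t` is the probability that the order statistics `U_(1) ≤ ... ≤ U_(k)` of
`k` i.i.d. uniform variables on `(0,1)` satisfy `U_(j) ≤ t j` for all `1 ≤ j ≤ k`
(1-indexed thresholds), expressed via the counting characterization
`U_(j) ≤ s ↔ #{i : U i ≤ s} ≥ j`. By convention `Psi 0 t = 1`. -/
noncomputable def Psi (k : ℕ) (t : ℕ → ℝ) : ℝ :=
  (iidUnif k {x | ∀ j ∈ Finset.Icc 1 k,
    j ≤ (Finset.univ.filter (fun i : Fin k => x i ≤ t j)).card}).toReal

/-- Rejection number of the step-up procedure with threshold `t` (1-indexed, `t 0 = 0`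
by convention) applied to the `p`-values `p : Fin m → ℝ`:
the largest `k ≤ m` such that at least `k` of the `p`-values are `≤ t k`. -/
noncomputable def kSUf (m : ℕ) (t : ℕ → ℝ) (p : Fin m → ℝ) : ℕ :=
  Nat.findGreatest (fun k => k ≤ (Finset.univ.filter (fun i : Fin m => p i ≤ t k)).card) m

/-- The set of hypotheses rejected by the step-up procedure. -/
noncomputable def rejSUf (m : ℕ) (t : ℕ → ℝ) (p : Fin m → ℝ) : Finset (Fin m) :=
  Finset.univ.filter (fun i => p i ≤ t (kSUf m t p))

/-- Rejection number of the step-down procedure with threshold `t` applied to `p`: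
the largest `k ≤ m` such that for all `k' ≤ k` at least `k'` of the `p`-values are `≤ t k'`. -/
noncomputable def kSDf (m : ℕ) (t : ℕ → ℝ) (p : Fin m → ℝ) : ℕ :=
  Nat.findGreatest
    (fun k => ∀ k' ∈ Finset.Icc 1 k,
      k' ≤ (Finset.univ.filter (fun i : Fin m => p i ≤ t k')).card) m

/-- The set of hypotheses rejected by the step-down procedure. -/
noncomputable def rejSDf (m : ℕ) (t : ℕ → ℝ) (p : Fin m → ℝ) : Finset (Fin m) :=
  Finset.univ.filter (fun i => p i ≤ t (kSDf m t p))

instance : IsProbabilityMeasure unifM := by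
  constructor
  rw [unifM, Measure.restrict_apply MeasurableSet.univ, Set.univ_inter, Real.volume_Ioo]
  norm_num

instance (k : ℕ) : IsProbabilityMeasure (iidUnif k) := by
  rw [iidUnif]; infer_instance

lemma unifM_Iic {c : ℝ} (h0 : 0 ≤ c) (h1 : c ≤ 1) : unifM (Set.Iic c) = ENNReal.ofReal c := by
  rw [unifM, Measure.restrict_apply measurableSet_Iic]
  refine le_antisymm ?_ ?_
  · have h2 : volume (Set.Iic c ∩ Set.Ioo 0 1) ≤ volume (Set.Icc 0 c) := by
      apply measure_mono; rintro x ⟨hx1, hx2, _⟩; exact ⟨hx2.le, hx1⟩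
    rwa [Real.volume_Icc, sub_zero] at h2
  · have h2 : volume (Set.Ioo 0 c) ≤ volume (Set.Iic c ∩ Set.Ioo 0 1) := by
      apply measure_mono; rintro x ⟨hx1, hx2⟩; exact ⟨hx2.le, hx1, lt_of_lt_of_le hx2 h1⟩
    rwa [Real.volume_Ioo, sub_zero] at h2

lemma meas_cnt {ι : Type*} [Fintype ι] (a : ℝ) :
    Measurable fun x : ι → ℝ => (univ.filter fun i => x i ≤ a).card := by
  simp_rw [Finset.card_filter]
  exact Finset.measurable_sum _ fun i _ =>
    Measurable.ite (measurableSet_le (measurable_pi_apply i) measurable_const)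
      measurable_const measurable_const

variable {μG : Measure ℝ} {G : ℝ → ℝ}

lemma G_mono [IsProbabilityMeasure μG] (hG : ∀ s, G s = (μG (Set.Iic s)).toReal) : Monotone G := fun a b hab => by
  rw [hG, hG]
  exact ENNReal.toReal_mono (measure_ne_top _ _) (measure_mono (Set.Iic_subset_Iic.2 hab))

lemma G_nonneg (hG : ∀ s, G s = (μG (Set.Iic s)).toReal) (s : ℝ) : 0 ≤ G s := by
  rw [hG]; exact ENNReal.toReal_nonneg

lemma G_le_one [IsProbabilityMeasure μG] (hG : ∀ s, G s = (μG (Set.Iic s)).toReal) (s : ℝ) :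
    G s ≤ 1 := by
  rw [hG]
  have h := measure_mono (Set.subset_univ (Set.Iic s)) (μ := μG)
  rw [measure_univ] at h
  simpa using ENNReal.toReal_mono (by norm_num) h

lemma compl_null [IsProbabilityMeasure μG] (hsupp : μG (Set.Icc 0 1) = 1) :
    μG (Set.Icc 0 1)ᶜ = 0 := by
  rw [measure_compl measurableSet_Icc (measure_ne_top _ _), hsupp, measure_univ, tsub_self]

lemma G_inter_Icc [IsProbabilityMeasure μG] (hsupp : μG (Set.Icc 0 1) = 1) (A B : Set ℝ)
    (h : A ∩ Set.Icc 0 1 = B ∩ Set.Icc 0 1) : μG A = μG B := by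
  have key : ∀ C D : Set ℝ, C ∩ Set.Icc 0 1 = D ∩ Set.Icc 0 1 → μG C ≤ μG D := by
    intro C D hCD
    have h1 : C ⊆ D ∪ (Set.Icc 0 1)ᶜ := by
      intro x hx
      by_cases hx2 : x ∈ Set.Icc (0:ℝ) 1
      · have : x ∈ D ∩ Set.Icc 0 1 := hCD ▸ ⟨hx, hx2⟩
        exact Or.inl this.1
      · exact Or.inr hx2
    calc μG C ≤ μG (D ∪ (Set.Icc 0 1)ᶜ) := measure_mono h1
      _ ≤ μG D + μG (Set.Icc 0 1)ᶜ := measure_union_le _ _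
      _ = μG D := by rw [compl_null hsupp, add_zero]
  exact le_antisymm (key _ _ h) (key _ _ h.symm)

lemma G_zero [IsProbabilityMeasure μG] (hsupp : μG (Set.Icc 0 1) = 1)
    (hG : ∀ s, G s = (μG (Set.Iic s)).toReal) (hGc : Continuous G) : G 0 = 0 := by
  have hseq : ∀ n : ℕ, G (-(1 / ((n:ℝ) + 1))) = 0 := by
    intro n
    have hnull : μG (Set.Iic (-(1 / ((n:ℝ) + 1)))) = 0 := by
      refine measure_mono_null ?_ (compl_null hsupp)
      intro x hx
      simp only [Set.mem_Iic] at hx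
      intro hmem
      have h1 : (0:ℝ) < 1 / ((n:ℝ) + 1) := by positivity
      have := hmem.1
      linarith
    rw [hG, hnull, ENNReal.toReal_zero]
  have hlim : Filter.Tendsto (fun n : ℕ => -(1 / ((n:ℝ) + 1))) Filter.atTop (nhds 0) := by
    have := tendsto_one_div_add_atTop_nhds_zero_nat (𝕜 := ℝ)
    simpa using this.neg
  have h2 : Filter.Tendsto (fun n : ℕ => G (-(1 / ((n:ℝ) + 1)))) Filter.atTop (nhds (G 0)) :=
    (hGc.tendsto 0).comp hlim
  have h3 : Filter.Tendsto (fun n : ℕ => G (-(1 / ((n:ℝ) + 1)))) Filter.atTop (nhds 0) := by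
    simp only [hseq]; exact tendsto_const_nhds
  exact tendsto_nhds_unique h2 h3

lemma G_one [IsProbabilityMeasure μG] (hsupp : μG (Set.Icc 0 1) = 1)
    (hG : ∀ s, G s = (μG (Set.Iic s)).toReal) : G 1 = 1 := by
  rw [hG]
  have h1 : μG (Set.Iic 1) = 1 := by
    refine le_antisymm (prob_le_one) ?_
    rw [← hsupp]
    exact measure_mono (fun x hx => hx.2)
  rw [h1, ENNReal.toReal_one]

lemma map_cdf [IsProbabilityMeasure μG] (hsupp : μG (Set.Icc 0 1) = 1)
    (hG : ∀ s, G s = (μG (Set.Iic s)).toReal)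
    (hGc : Continuous G) (hGm : StrictMonoOn G (Set.Icc 0 1)) :
    Measure.map G μG = unifM := by
  have hmeas : Measurable G := hGc.measurable
  have : IsProbabilityMeasure (Measure.map G μG) := Measure.isProbabilityMeasure_map hmeas.aemeasurable
  refine Measure.ext_of_Iic _ _ (fun c => ?_)
  rw [Measure.map_apply hmeas measurableSet_Iic]
  rcases lt_or_ge c 0 with hc | hc
  · have h1 : G ⁻¹' Set.Iic c = ∅ := by
      ext x
      simp only [Set.mem_preimage, Set.mem_Iic, Set.mem_empty_iff_false, iff_false, not_le]
      exact lt_of_lt_of_le hc (G_nonneg hG x)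
    rw [h1, measure_empty, unifM, Measure.restrict_apply measurableSet_Iic]
    have h2 : Set.Iic c ∩ Set.Ioo 0 1 = ∅ := by
      ext x
      simp only [Set.mem_inter_iff, Set.mem_Iic, Set.mem_Ioo, Set.mem_empty_iff_false, iff_false]
      rintro ⟨ha, hb, _⟩
      exact absurd (lt_of_le_of_lt ha hc) (not_lt.2 hb.le)
    rw [h2, measure_empty]
  rcases le_or_gt c 1 with hc1 | hc1
  · have hc' : c ∈ Set.Icc (G 0) (G 1) := by
      rw [G_zero hsupp hG hGc, G_one hsupp hG]; exact ⟨hc, hc1⟩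
    obtain ⟨s, hs01, hGs⟩ := intermediate_value_Icc (by norm_num : (0:ℝ) ≤ 1)
      (hGc.continuousOn) hc'
    have hsets : (G ⁻¹' Set.Iic c) ∩ Set.Icc 0 1 = Set.Iic s ∩ Set.Icc 0 1 := by
      ext x
      simp only [Set.mem_inter_iff, Set.mem_preimage, Set.mem_Iic, and_congr_left_iff]
      intro hx
      rw [← hGs]
      exact hGm.le_iff_le hx hs01
    rw [G_inter_Icc hsupp _ _ hsets]
    have h5 : μG (Set.Iic s) = ENNReal.ofReal (G s) := by
      rw [hG]; exact (ENNReal.ofReal_toReal (measure_ne_top _ _)).symm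
    rw [h5, hGs, unifM_Iic hc hc1]
  · have h1 : μG (G ⁻¹' Set.Iic c) = 1 := by
      refine le_antisymm prob_le_one ?_
      rw [← hsupp]
      refine measure_mono (fun x hx => ?_)
      simp only [Set.mem_preimage, Set.mem_Iic]
      calc G x ≤ G 1 := G_mono hG hx.2
        _ = 1 := G_one hsupp hG
        _ ≤ c := hc1.le
    rw [h1, unifM, Measure.restrict_apply measurableSet_Iic]
    have h2 : Set.Iic c ∩ Set.Ioo 0 1 = Set.Ioo 0 1 := by
      ext x
      simp only [Set.mem_inter_iff, Set.mem_Iic, Set.mem_Ioo, and_iff_right_iff_imp]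
      exact fun hx => le_of_lt (lt_trans hx.2 hc1)
    rw [h2, Real.volume_Ioo]
    norm_num

lemma cnt_mono {n : ℕ} (x : Fin n → ℝ) {a b : ℝ} (hab : a ≤ b) :
    (univ.filter fun i => x i ≤ a).card ≤ (univ.filter fun i => x i ≤ b).card :=
  Finset.card_le_card (Finset.monotone_filter_right _ (fun i _ (hi : x i ≤ a) => le_trans hi hab))

lemma findGreatest_congr {P Q : ℕ → Prop} [DecidablePred P] [DecidablePred Q] (n : ℕ)
    (h : ∀ j, j ≤ n → (P j ↔ Q j)) : Nat.findGreatest P n = Nat.findGreatest Q n := by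
  induction n with
  | zero => rfl
  | succ n ih =>
    rw [Nat.findGreatest_succ, Nat.findGreatest_succ]
    by_cases hP : P (n+1)
    · rw [if_pos hP, if_pos ((h _ le_rfl).1 hP)]
    · rw [if_neg hP, if_neg (fun hQ => hP ((h _ le_rfl).2 hQ)),
        ih (fun j hj => h j (Nat.le_succ_of_le hj))]

lemma measSet_cnt_mem {ι : Type*} [Fintype ι] (P : ℕ → Prop) (a : ℝ) :
    MeasurableSet {x : ι → ℝ | P ((univ.filter fun i => x i ≤ a).card)} :=
  (meas_cnt a) ((Set.to_countable {y : ℕ | P y}).measurableSet)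

/-- The rejection number of step-up equals the number of rejected hypotheses. -/
lemma rej_card (m : ℕ) (t : ℕ → ℝ) (ht0 : t 0 = 0) (ht : MonotoneOn t (Set.Icc 1 m))
    (ht01 : ∀ j ∈ Set.Icc 1 m, t j ∈ Set.Icc (0:ℝ) 1) (x : Fin m → ℝ) :
    (rejSUf m t x).card = kSUf m t x := by
  set K := kSUf m t x with hK
  obtain ⟨hKm, hP, hmax⟩ := (Nat.findGreatest_eq_iff.1 hK.symm :
    K ≤ m ∧ (K ≠ 0 → K ≤ (univ.filter fun i : Fin m => x i ≤ t K).card) ∧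
      ∀ ⦃j⦄, K < j → j ≤ m → ¬ (j ≤ (univ.filter fun i : Fin m => x i ≤ t j).card))
  rw [rejSUf, ← hK]
  rcases Nat.eq_zero_or_pos K with hK0 | hK0
  · rw [hK0]
    rcases Nat.eq_zero_or_pos m with hm0 | hm0
    · subst hm0
      apply Nat.le_zero.1
      exact (Finset.card_filter_le _ _).trans (by simp)
    · have h1 : ¬ (1 ≤ (univ.filter fun i : Fin m => x i ≤ t 1).card) :=
        hmax (hK0 ▸ Nat.one_pos : K < 1) hm0
      have hempty : (univ.filter fun i : Fin m => x i ≤ t 0).card = 0 := by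
        rw [Finset.card_eq_zero, Finset.filter_eq_empty_iff]
        intro i _
        intro hle
        apply h1
        rw [Nat.one_le_iff_ne_zero, Ne, Finset.card_eq_zero, Finset.filter_eq_empty_iff]
        push_neg
        refine ⟨i, Finset.mem_univ i, ?_⟩
        calc x i ≤ t 0 := hle
          _ = 0 := ht0
          _ ≤ t 1 := (ht01 1 ⟨le_rfl, hm0⟩).1
      exact hempty
  · have hge : K ≤ (univ.filter fun i : Fin m => x i ≤ t K).card := hP (Nat.pos_iff_ne_zero.1 hK0)
    refine le_antisymm ?_ hge
    by_contra hlt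
    push_neg at hlt
    rcases eq_or_lt_of_le hKm with hKm' | hKm'
    · have h4 : (univ.filter fun i : Fin m => x i ≤ t K).card ≤ m :=
        (Finset.card_filter_le _ _).trans (by simp)
      exact absurd hlt (not_lt.2 (le_trans h4 (le_of_eq hKm'.symm)))
    · have h3 : t K ≤ t (K+1) := ht ⟨hK0, hKm⟩ ⟨le_trans hK0 (Nat.le_succ K), hKm'⟩
        (Nat.le_succ K)
      have h2 := lt_of_lt_of_le hlt (cnt_mono x h3)
      exact hmax (Nat.lt_succ_self K) hKm' (Nat.succ_le_of_lt h2)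

instance : NullSingletonClass unifM := ⟨fun c => by
  rw [unifM, Measure.restrict_apply (measurableSet_singleton c)]
  exact measure_mono_null Set.inter_subset_left (measure_singleton c)⟩

lemma ae_ne_iid (n : ℕ) (i : Fin n) (c : ℝ) : ∀ᵐ x ∂iidUnif n, x i ≠ c := by
  rw [iidUnif]
  exact Measure.ae_eval_ne (fun _ : Fin n => unifM) i c

lemma ae_Ioo_iid (n : ℕ) (i : Fin n) : ∀ᵐ x ∂iidUnif n, x i ∈ Set.Ioo (0:ℝ) 1 := by
  have h0 : unifM (Set.Ioo (0:ℝ) 1)ᶜ = 0 := by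
    rw [unifM, Measure.restrict_apply measurableSet_Ioo.compl]
    simp
  have h1 := Measure.pi_eval_preimage_null (fun _ : Fin n => unifM) (i := i) h0
  rw [iidUnif, ae_iff]
  exact h1

lemma card_filter_equiv {α β : Type*} [Fintype α] [Fintype β] (e : α ≃ β) (q : β → Prop) :
    (univ.filter fun a => q (e a)).card = (univ.filter q).card := by
  refine Finset.card_bij (fun a _ => e a) ?_ ?_ ?_
  · intro a ha
    rw [Finset.mem_filter] at ha ⊢
    exact ⟨Finset.mem_univ _, ha.2⟩
  · intro a _ a' _ h
    exact e.injective h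
  · intro b hb
    rw [Finset.mem_filter] at hb
    refine ⟨e.symm b, ?_, by simp⟩
    rw [Finset.mem_filter]
    refine ⟨Finset.mem_univ _, by simpa using hb.2⟩

lemma card_filter_split {α : Type*} [Fintype α] (p q : α → Prop) :
    (univ.filter q).card
      = (univ.filter fun i : {i // p i} => q i.1).card
        + (univ.filter fun i : {i // ¬ p i} => q i.1).card := by
  have h1 : (univ.filter fun i : {i // p i} => q i.1).card
      = (univ.filter fun i => q i ∧ p i).card := by
    rw [← Fintype.card_subtype, ← Fintype.card_subtype]
    refine Fintype.card_congr ((Equiv.subtypeSubtypeEquivSubtypeInter p q).trans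
      (Equiv.subtypeEquivRight (fun x => and_comm)))
  have h2 : (univ.filter fun i : {i // ¬ p i} => q i.1).card
      = (univ.filter fun i => q i ∧ ¬ p i).card := by
    rw [← Fintype.card_subtype, ← Fintype.card_subtype]
    refine Fintype.card_congr ((Equiv.subtypeSubtypeEquivSubtypeInter (fun i => ¬ p i) q).trans
      (Equiv.subtypeEquivRight (fun x => and_comm)))
  rw [h1, h2, ← Finset.filter_filter, ← Finset.filter_filter]
  exact (Finset.card_filter_add_card_filter_not (fun i => p i)).symm

lemma mp_reflect : MeasurePreserving (fun a : ℝ => 1 - a) unifM unifM := by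
  have h1 : MeasurePreserving (fun a : ℝ => 1 - a) volume volume := by
    have hneg : MeasurePreserving (fun a : ℝ => -a) volume volume :=
      Measure.measurePreserving_neg _
    have hadd : MeasurePreserving (fun a : ℝ => 1 + a) volume volume :=
      measurePreserving_add_left volume 1
    have h := hadd.comp hneg
    have heq : ((fun a : ℝ => 1 + a) ∘ fun a : ℝ => -a) = fun a : ℝ => 1 - a := by
      funext a
      simp [sub_eq_add_neg]
    rwa [heq] at h
  have h2 : (fun a : ℝ => 1 - a) ⁻¹' (Set.Ioo 0 1) = Set.Ioo 0 1 := by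
    ext a
    simp only [Set.mem_preimage, Set.mem_Ioo]
    constructor <;> (rintro ⟨u, v⟩; constructor <;> linarith)
  have h3 := h1.restrict_preimage (measurableSet_Ioo : MeasurableSet (Set.Ioo (0:ℝ) 1))
  rw [h2] at h3
  exact h3

lemma mp_reflect_pi (n : ℕ) :
    MeasurePreserving (fun y : Fin n → ℝ => fun i => 1 - y i) (iidUnif n) (iidUnif n) := by
  rw [iidUnif]
  exact measurePreserving_pi _ _ (fun _ => mp_reflect)

lemma Q_eq_Psi (m k : ℕ) (hkm : k ≤ m) (τ : ℕ → ℝ) :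
    iidUnif (m - k) {z | ∀ j, k < j → j ≤ m →
        (univ.filter fun i : Fin (m - k) => z i ≤ τ j).card + k < j}
      = iidUnif (m - k) {y | ∀ j ∈ Finset.Icc 1 (m - k),
          j ≤ (univ.filter fun i : Fin (m - k) => y i ≤ 1 - τ (m + 1 - j)).card} := by
  set n := m - k with hn
  have hmeasPsi : MeasurableSet {y : Fin n → ℝ | ∀ j ∈ Finset.Icc 1 n,
      j ≤ (univ.filter fun i : Fin n => y i ≤ 1 - τ (m + 1 - j)).card} := by
    have : {y : Fin n → ℝ | ∀ j ∈ Finset.Icc 1 n,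
        j ≤ (univ.filter fun i : Fin n => y i ≤ 1 - τ (m + 1 - j)).card}
      = ⋂ j ∈ Finset.Icc 1 n, {y : Fin n → ℝ |
          j ≤ (univ.filter fun i : Fin n => y i ≤ 1 - τ (m + 1 - j)).card} := by
      ext y; simp [Set.mem_iInter]
    rw [this]
    exact MeasurableSet.biInter (Set.to_countable _)
      (fun j _ => measSet_cnt_mem (fun c => j ≤ c) _)
  have hrefl := (mp_reflect_pi n).measure_preimage hmeasPsi.nullMeasurableSet
  rw [← hrefl]
  -- now compare Q-set with the preimage, up to a null set
  have hae : ∀ᵐ z ∂iidUnif n, ∀ (i : Fin n) (j : ℕ), k < j → j ≤ m → z i ≠ τ j := by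
    rw [ae_all_iff]
    intro i
    rw [ae_all_iff]
    intro j
    by_cases hj : k < j ∧ j ≤ m
    · filter_upwards [ae_ne_iid n i (τ j)] with z hz
      exact fun _ _ => hz
    · filter_upwards with z h1 h2
      exact absurd ⟨h1, h2⟩ hj
  refine measure_congr ?_
  filter_upwards [hae] with z hz
  have key : ∀ j, k < j → j ≤ m →
      ((univ.filter fun i : Fin n => z i ≤ τ j).card + k < j ↔
        (m + 1 - j) ≤ (univ.filter fun i : Fin n => 1 - z i ≤ 1 - τ j).card) := by
    intro j hj1 hj2
    have hfil : (univ.filter fun i : Fin n => 1 - z i ≤ 1 - τ j)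
        = univ.filter fun i : Fin n => ¬ (z i ≤ τ j) := by
      refine Finset.filter_congr (fun i _ => ?_)
      constructor
      · intro h hle
        have h1 : τ j ≤ z i := by linarith
        exact hz i j hj1 hj2 (le_antisymm hle h1)
      · intro h
        have h1 : τ j < z i := lt_of_not_ge h
        linarith
    have hsum : (univ.filter fun i : Fin n => z i ≤ τ j).card
        + (univ.filter fun i : Fin n => ¬ (z i ≤ τ j)).card = n := by
      rw [Finset.card_filter_add_card_filter_not]
      simp
    rw [hfil]
    omega
  show (∀ j, k < j → j ≤ m → (univ.filter fun i : Fin n => z i ≤ τ j).card + k < j)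
      = ((fun i => 1 - z i) ∈ {y : Fin n → ℝ | ∀ j ∈ Finset.Icc 1 n,
          j ≤ (univ.filter fun i : Fin n => y i ≤ 1 - τ (m + 1 - j)).card})
  rw [eq_iff_iff]
  simp only [Set.mem_setOf_eq, Finset.mem_Icc]
  constructor
  · intro h j' hj'
    have hj : k < m + 1 - j' ∧ m + 1 - j' ≤ m := by omega
    have h2 := (key _ hj.1 hj.2).1 (h _ hj.1 hj.2)
    have e1 : m + 1 - (m + 1 - j') = j' := by omega
    rwa [e1] at h2
  · intro h j hj1 hj2
    have hj' : 1 ≤ m + 1 - j ∧ m + 1 - j ≤ n := by omega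
    have h2 := h _ hj'
    have e1 : m + 1 - (m + 1 - j) = j := by omega
    rw [e1] at h2
    exact (key j hj1 hj2).2 h2

lemma ES_measure (m k : ℕ) (hkm : k ≤ m) (τ : ℕ → ℝ) (hτk0 : 0 ≤ τ k) (hτk1 : τ k ≤ 1)
    (hτle : ∀ j, k < j → j ≤ m → τ k ≤ τ j)
    (S : Finset (Fin m)) (hS : S.card = k) :
    iidUnif m {x | (∀ i ∈ S, x i ≤ τ k) ∧ (∀ i ∉ S, τ k < x i) ∧
        ∀ j, k < j → j ≤ m → (univ.filter fun i : Fin m => x i ≤ τ j).card < j}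
      = (ENNReal.ofReal (τ k)) ^ k
        * iidUnif (m - k) {z | ∀ j, k < j → j ≤ m →
            (univ.filter fun i : Fin (m - k) => z i ≤ τ j).card + k < j} := by
  classical
  obtain ⟨p, hp⟩ : ∃ p : Fin m → Prop, p = fun i => i ∈ S := ⟨_, rfl⟩
  set A : Set ({i // p i} → ℝ) := Set.univ.pi (fun _ => Set.Iic (τ k)) with hA
  set B : Set ({i // ¬ p i} → ℝ) := {z | (∀ i, τ k < z i) ∧
      ∀ j, k < j → j ≤ m → (univ.filter fun i => z i ≤ τ j).card + k < j} with hB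
  have hcardP : Fintype.card {i // p i} = k :=
    (Fintype.card_of_subtype S (fun i => by rw [hp])).trans hS
  have hcardNP : Fintype.card {i // ¬ p i} = m - k := by
    rw [Fintype.card_subtype_compl, hcardP, Fintype.card_fin]
  have hAmeas : MeasurableSet A := MeasurableSet.univ_pi (fun _ => measurableSet_Iic)
  have hBmeas : MeasurableSet B := by
    rw [hB, Set.setOf_and]
    refine MeasurableSet.inter ?_ ?_
    · rw [Set.setOf_forall]
      exact MeasurableSet.iInter (fun i =>
        measurableSet_lt measurable_const (measurable_pi_apply i))
    · rw [Set.setOf_forall]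
      refine MeasurableSet.iInter (fun j => ?_)
      rw [Set.setOf_forall]
      refine MeasurableSet.iInter (fun _ => ?_)
      rw [Set.setOf_forall]
      exact MeasurableSet.iInter (fun _ => measSet_cnt_mem (fun c => c + k < j) _)
  have hsplit := measurePreserving_piEquivPiSubtypeProd (fun _ : Fin m => unifM) p
  have hpre : {x : Fin m → ℝ | (∀ i ∈ S, x i ≤ τ k) ∧ (∀ i ∉ S, τ k < x i) ∧
        ∀ j, k < j → j ≤ m → (univ.filter fun i : Fin m => x i ≤ τ j).card < j}
      = (MeasurableEquiv.piEquivPiSubtypeProd (fun _ : Fin m => ℝ) p) ⁻¹' (A ×ˢ B) := by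
    ext x
    simp only [Set.mem_preimage, Set.mem_prod, Set.mem_setOf_eq, hA, hB,
      MeasurableEquiv.piEquivPiSubtypeProd, MeasurableEquiv.coe_mk,
      Equiv.piEquivPiSubtypeProd_apply, Set.mem_pi, Set.mem_univ, forall_true_left, Set.mem_Iic]
    have hmemP : ∀ i : Fin m, p i ↔ i ∈ S := fun i => by rw [hp]
    constructor
    · rintro ⟨h1, h2, h3⟩
      refine ⟨fun i => h1 i.1 ((hmemP i.1).1 i.2), fun i => h2 i.1 (fun hc => i.2 ((hmemP i.1).2 hc)),
        fun j hj1 hj2 => ?_⟩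
      have hs := card_filter_split p (fun i => x i ≤ τ j)
      have hfull : (univ.filter fun i : {i // p i} => x i.1 ≤ τ j).card = k := by
        have he : (univ.filter fun i : {i // p i} => x i.1 ≤ τ j) = univ := by
          rw [Finset.filter_eq_self]
          intro i _
          exact le_trans (h1 i.1 ((hmemP i.1).1 i.2)) (hτle j hj1 hj2)
        rw [he, Finset.card_univ, hcardP]
      have h4 := h3 j hj1 hj2
      omega
    · rintro ⟨h1, h2, h3⟩
      refine ⟨fun i hi => h1 ⟨i, (hmemP i).2 hi⟩, fun i hi => h2 ⟨i, fun hc => hi ((hmemP i).1 hc)⟩,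
        fun j hj1 hj2 => ?_⟩
      have hs := card_filter_split p (fun i => x i ≤ τ j)
      have hfull : (univ.filter fun i : {i // p i} => x i.1 ≤ τ j).card = k := by
        have he : (univ.filter fun i : {i // p i} => x i.1 ≤ τ j) = univ := by
          rw [Finset.filter_eq_self]
          intro i _
          exact le_trans (h1 i) (hτle j hj1 hj2)
        rw [he, Finset.card_univ, hcardP]
      have h4 := h3 j hj1 hj2
      omega
  rw [iidUnif, hpre, hsplit.measure_preimage (hAmeas.prod hBmeas).nullMeasurableSet,
    Measure.prod_prod]
  congr 1
  · rw [hA, Measure.pi_pi]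
    simp only [unifM_Iic hτk0 hτk1]
    rw [Finset.prod_const, Finset.card_univ, hcardP]
  · have e : Fin (m - k) ≃ {i // ¬ p i} := (Fintype.equivFinOfCardEq hcardNP).symm
    have hmp := measurePreserving_piCongrLeft (fun _ : {i // ¬ p i} => unifM) e
    rw [← hmp.measure_preimage hBmeas.nullMeasurableSet]
    have hpreB : (MeasurableEquiv.piCongrLeft (fun _ : {i // ¬ p i} => ℝ) e) ⁻¹' B
        = {z : Fin (m - k) → ℝ | ∀ j, k < j → j ≤ m →
            (univ.filter fun i => z i ≤ τ j).card + k < j} := by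
      ext z
      set w := (MeasurableEquiv.piCongrLeft (fun _ : {i // ¬ p i} => ℝ) e) z with hw
      have happ : ∀ i' : Fin (m - k), w (e i') = z i' := by
        intro i'
        rw [hw]
        exact MeasurableEquiv.piCongrLeft_apply_apply (β := fun _ : {i // ¬ p i} => ℝ) e z i'
      simp only [Set.mem_preimage, hB, Set.mem_setOf_eq, ← hw]
      have hcnt : ∀ c : ℝ, (univ.filter fun i => w i ≤ c).card
          = (univ.filter fun i' : Fin (m - k) => z i' ≤ c).card := by
        intro c
        rw [← card_filter_equiv e (fun i => w i ≤ c)]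
        congr 1
        refine Finset.filter_congr (fun i' _ => ?_)
        rw [happ i']
      constructor
      · rintro ⟨h1, h2⟩ j hj1 hj2
        rw [← hcnt]
        exact h2 j hj1 hj2
      · intro h
        refine ⟨?_, fun j hj1 hj2 => by rw [hcnt]; exact h j hj1 hj2⟩
        have hz : ∀ i' : Fin (m - k), τ k < z i' := by
          intro i'
          rcases lt_or_eq_of_le hkm with hkm' | hkm'
          · have h1 := h (k+1) (Nat.lt_succ_self k) hkm'
            have h0 : (univ.filter fun i'' : Fin (m - k) => z i'' ≤ τ (k+1)).card = 0 := by
              omega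
            rw [Finset.card_eq_zero, Finset.filter_eq_empty_iff] at h0
            have h5 := h0 (Finset.mem_univ i')
            exact lt_of_le_of_lt (hτle (k+1) (Nat.lt_succ_self k) hkm') (lt_of_not_ge h5)
          · exact absurd i'.isLt (by omega)
        intro i
        have hi : i = e (e.symm i) := (e.apply_symm_apply i).symm
        rw [hi, happ]
        exact hz _
    rw [hpreB]
    rfl

theorem core_unif (m k : ℕ) (hkm : k ≤ m) (τ : ℕ → ℝ) (hτ0 : τ 0 = 0)
    (hτ : MonotoneOn τ (Set.Icc 1 m)) (hτ01 : ∀ j ∈ Set.Icc 1 m, τ j ∈ Set.Icc (0:ℝ) 1) :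
    iidUnif m {x | kSUf m τ x = k}
      = (m.choose k) * (ENNReal.ofReal (τ k)) ^ k
        * iidUnif (m - k) {y | ∀ j ∈ Finset.Icc 1 (m - k),
            j ≤ (univ.filter fun i : Fin (m - k) => y i ≤ 1 - τ (m + 1 - j)).card} := by
  classical
  have hτle : ∀ j, k < j → j ≤ m → τ k ≤ τ j := by
    intro j h1 h2
    rcases Nat.eq_zero_or_pos k with hk0 | hk0
    · rw [hk0, hτ0]
      exact (hτ01 j ⟨by omega, h2⟩).1
    · exact hτ ⟨hk0, hkm⟩ ⟨by omega, h2⟩ h1.le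
  have hτk0 : 0 ≤ τ k := by
    rcases Nat.eq_zero_or_pos k with hk0 | hk0
    · rw [hk0, hτ0]
    · exact (hτ01 k ⟨hk0, hkm⟩).1
  have hτk1 : τ k ≤ 1 := by
    rcases Nat.eq_zero_or_pos k with hk0 | hk0
    · rw [hk0, hτ0]; norm_num
    · exact (hτ01 k ⟨hk0, hkm⟩).2
  -- rewrite event via findGreatest characterization
  have hev : {x : Fin m → ℝ | kSUf m τ x = k}
      = {x : Fin m → ℝ | (k ≠ 0 → k ≤ (univ.filter fun i => x i ≤ τ k).card) ∧
          ∀ j, k < j → j ≤ m → (univ.filter fun i => x i ≤ τ j).card < j} := by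
    ext x
    simp only [Set.mem_setOf_eq, kSUf]
    rw [Nat.findGreatest_eq_iff]
    constructor
    · rintro ⟨h1, h2, h3⟩
      exact ⟨h2, fun j hj1 hj2 => lt_of_not_ge (h3 hj1 hj2)⟩
    · rintro ⟨h1, h2⟩
      exact ⟨hkm, h1, fun j hj1 hj2 hle => absurd hle (not_le.2 (h2 j hj1 hj2))⟩
  rw [hev]
  -- a.e. equal to union over subsets of size k
  set ES : Finset (Fin m) → Set (Fin m → ℝ) := fun S =>
    {x | (∀ i ∈ S, x i ≤ τ k) ∧ (∀ i ∉ S, τ k < x i) ∧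
      ∀ j, k < j → j ≤ m → (univ.filter fun i : Fin m => x i ≤ τ j).card < j} with hES
  have hgood : ∀ᵐ x ∂iidUnif m, ∀ i, x i ∈ Set.Ioo (0:ℝ) 1 := by
    rw [ae_all_iff]
    exact fun i => ae_Ioo_iid m i
  have hunion : iidUnif m {x : Fin m → ℝ |
        (k ≠ 0 → k ≤ (univ.filter fun i => x i ≤ τ k).card) ∧
          ∀ j, k < j → j ≤ m → (univ.filter fun i => x i ≤ τ j).card < j}
      = iidUnif m (⋃ S ∈ Finset.powersetCard k (univ : Finset (Fin m)), ES S) := by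
    refine measure_congr ?_
    filter_upwards [hgood] with x hx
    rw [eq_iff_iff]
    constructor
    · rintro ⟨h1, h2⟩
      refine Set.mem_iUnion₂.2 ⟨univ.filter (fun i => x i ≤ τ k), ?_, ?_⟩
      swap
      · simp only [hES, Set.mem_setOf_eq]
        refine ⟨fun i hi => (Finset.mem_filter.1 hi).2,
          fun i hi => lt_of_not_ge (fun hc => hi (Finset.mem_filter.2 ⟨Finset.mem_univ i, hc⟩)),
          h2⟩
      · rw [Finset.mem_powersetCard]
        refine ⟨Finset.filter_subset _ _, ?_⟩
        rcases Nat.eq_zero_or_pos k with hk0 | hk0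
        · rw [hk0, Finset.card_eq_zero, Finset.filter_eq_empty_iff]
          intro i _ hle
          have := (hx i).1
          rw [hτ0] at hle
          linarith
        · refine le_antisymm ?_ (h1 (Nat.pos_iff_ne_zero.1 hk0))
          by_contra hlt
          push_neg at hlt
          rcases eq_or_lt_of_le hkm with hkm' | hkm'
          · have h4 : (univ.filter fun i : Fin m => x i ≤ τ k).card ≤ m :=
              (Finset.card_filter_le _ _).trans (by simp)
            omega
          · have h3 : τ k ≤ τ (k+1) := hτle (k+1) (Nat.lt_succ_self k) hkm'
            have h2' := lt_of_lt_of_le hlt (cnt_mono x h3)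
            have := h2 (k+1) (Nat.lt_succ_self k) hkm'
            omega
    · intro hmem
      obtain ⟨S, hS, hxS⟩ := Set.mem_iUnion₂.1 hmem
      rw [Finset.mem_powersetCard] at hS
      simp only [hES, Set.mem_setOf_eq] at hxS
      obtain ⟨h1, h2, h3⟩ := hxS
      refine ⟨fun _ => ?_, h3⟩
      have hcard : S.card ≤ (univ.filter fun i => x i ≤ τ k).card :=
        Finset.card_le_card (fun i hi => Finset.mem_filter.2 ⟨Finset.mem_univ i, h1 i hi⟩)
      omega
  rw [hunion]
  have hESmeas : ∀ S : Finset (Fin m), MeasurableSet (ES S) := by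
    intro S
    rw [hES]
    simp only [Set.setOf_and]
    refine MeasurableSet.inter ?_ (MeasurableSet.inter ?_ ?_)
    · rw [Set.setOf_forall]
      refine MeasurableSet.iInter (fun i => ?_)
      rw [Set.setOf_forall]
      exact MeasurableSet.iInter (fun _ =>
        measurableSet_le (measurable_pi_apply i) measurable_const)
    · rw [Set.setOf_forall]
      refine MeasurableSet.iInter (fun i => ?_)
      rw [Set.setOf_forall]
      exact MeasurableSet.iInter (fun _ =>
        measurableSet_lt measurable_const (measurable_pi_apply i))
    · rw [Set.setOf_forall]
      refine MeasurableSet.iInter (fun j => ?_)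
      rw [Set.setOf_forall]
      refine MeasurableSet.iInter (fun _ => ?_)
      rw [Set.setOf_forall]
      exact MeasurableSet.iInter (fun _ => measSet_cnt_mem (fun c => c < j) _)
  have hdisj : Set.PairwiseDisjoint
      ↑(Finset.powersetCard k (univ : Finset (Fin m))) ES := by
    intro S hSmem T hTmem hST
    rw [Finset.mem_coe, Finset.mem_powersetCard] at hSmem hTmem
    refine Set.disjoint_left.2 (fun x hxS hxT => ?_)
    have hsub : ¬ S ⊆ T := fun hsub =>
      hST (Finset.eq_of_subset_of_card_le hsub (le_of_eq (hTmem.2.trans hSmem.2.symm)))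
    obtain ⟨i, hiS, hiT⟩ := Finset.not_subset.1 hsub
    rw [hES] at hxS hxT
    exact absurd (hxS.1 i hiS) (not_le.2 (hxT.2.1 i hiT))
  rw [measure_biUnion_finset hdisj (fun S _ => hESmeas S)]
  have hterm : ∀ S ∈ Finset.powersetCard k (univ : Finset (Fin m)),
      iidUnif m (ES S) = (ENNReal.ofReal (τ k)) ^ k
        * iidUnif (m - k) {z | ∀ j, k < j → j ≤ m →
            (univ.filter fun i : Fin (m - k) => z i ≤ τ j).card + k < j} := by
    intro S hS
    rw [Finset.mem_powersetCard] at hS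
    exact ES_measure m k hkm τ hτk0 hτk1 hτle S hS.2
  rw [Finset.sum_congr rfl hterm, Finset.sum_const, Finset.card_powersetCard,
    Finset.card_univ, Fintype.card_fin, nsmul_eq_mul, ← mul_assoc]
  rw [Q_eq_Psi m k hkm τ]

lemma measSet_kSUf (m : ℕ) (t : ℕ → ℝ) (k : ℕ) (hkm : k ≤ m) :
    MeasurableSet {x : Fin m → ℝ | kSUf m t x = k} := by
  classical
  have hset : {x : Fin m → ℝ | kSUf m t x = k}
      = {x : Fin m → ℝ | (k ≠ 0 → k ≤ (univ.filter fun i => x i ≤ t k).card)} ∩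
        ⋂ (j : ℕ), ⋂ (_ : k < j), ⋂ (_ : j ≤ m),
          {x : Fin m → ℝ | ¬ (j ≤ (univ.filter fun i => x i ≤ t j).card)} := by
    ext x
    simp only [Set.mem_setOf_eq, Set.mem_inter_iff, Set.mem_iInter, kSUf]
    rw [Nat.findGreatest_eq_iff]
    constructor
    · rintro ⟨h1, h2, h3⟩
      exact ⟨h2, fun j hj1 hj2 => h3 hj1 hj2⟩
    · rintro ⟨h1, h2⟩
      exact ⟨hkm, h1, fun j hj1 hj2 => h2 j hj1 hj2⟩
  rw [hset]
  refine MeasurableSet.inter ?_ ?_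
  · rw [Set.setOf_forall]
    exact MeasurableSet.iInter (fun _ => measSet_cnt_mem (fun c => k ≤ c) _)
  · refine MeasurableSet.iInter (fun j => ?_)
    refine MeasurableSet.iInter (fun _ => ?_)
    refine MeasurableSet.iInter (fun _ => ?_)
    exact measSet_cnt_mem (fun c => ¬ (j ≤ c)) _

/-- Distribution of the step-up rejection number for i.i.d. p-values with continuous
increasing c.d.f. `G`:
`P(|SU(t)| = k) = C(m,k)(G(t_k))^k Ψ_{m-k}(1-G(t_m), ..., 1-G(t_{k+1}))`,
the `j`-th (1-indexed) argument of `Ψ_{m-k}` being `1 - G(t_{m+1-j})`. -/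
theorem stepup_rejection_distribution (m : ℕ)
    (μG : Measure ℝ) [IsProbabilityMeasure μG] (hsupp : μG (Set.Icc 0 1) = 1)
    (G : ℝ → ℝ) (hG : ∀ s, G s = (μG (Set.Iic s)).toReal)
    (hGc : Continuous G) (hGm : StrictMonoOn G (Set.Icc 0 1))
    (t : ℕ → ℝ) (ht0 : t 0 = 0) (ht : MonotoneOn t (Set.Icc 1 m))
    (ht01 : ∀ j ∈ Set.Icc 1 m, t j ∈ Set.Icc (0:ℝ) 1)
    (k : ℕ) (hkm : k ≤ m) :
    ((Measure.pi fun _ : Fin m => μG) {x | (rejSUf m t x).card = k}).toReal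
      = (m.choose k : ℝ) * (G (t k)) ^ k
          * Psi (m - k) (fun j => 1 - G (t (m + 1 - j))) := by
  classical
  set τ : ℕ → ℝ := fun j => G (t j) with hτ
  have hτ0 : τ 0 = 0 := by rw [hτ]; simp only; rw [ht0]; exact G_zero hsupp hG hGc
  have hτmono : MonotoneOn τ (Set.Icc 1 m) :=
    fun a ha b hb hab => G_mono hG (ht ha hb hab)
  have hτ01 : ∀ j ∈ Set.Icc 1 m, τ j ∈ Set.Icc (0:ℝ) 1 :=
    fun j _ => ⟨G_nonneg hG _, G_le_one hG _⟩
  -- rewrite the event in terms of kSUf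
  have hset : {x : Fin m → ℝ | (rejSUf m t x).card = k} = {x | kSUf m t x = k} := by
    ext x
    simp only [Set.mem_setOf_eq, rej_card m t ht0 ht ht01 x]
  rw [hset]
  -- transfer to uniform
  have hmpG : MeasurePreserving G μG unifM := ⟨hGc.measurable, map_cdf hsupp hG hGc hGm⟩
  have hmpPi : MeasurePreserving (fun x : Fin m → ℝ => fun i => G (x i))
      (Measure.pi fun _ : Fin m => μG) (iidUnif m) := by
    rw [iidUnif]
    exact measurePreserving_pi _ _ (fun _ => hmpG)
  have hUmeas : MeasurableSet {u : Fin m → ℝ | kSUf m τ u = k} := measSet_kSUf m τ k hkm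
  have hgoodG : ∀ᵐ x ∂(Measure.pi fun _ : Fin m => μG), ∀ i, x i ∈ Set.Icc (0:ℝ) 1 := by
    rw [ae_all_iff]
    intro i
    have h0 : (Measure.pi fun _ : Fin m => μG) {x : Fin m → ℝ | ¬ x i ∈ Set.Icc (0:ℝ) 1} = 0 :=
      Measure.pi_eval_preimage_null (fun _ : Fin m => μG) (i := i) (compl_null hsupp)
    rw [ae_iff]
    exact h0
  have hcong : ∀ x : Fin m → ℝ, (∀ i, x i ∈ Set.Icc (0:ℝ) 1) →
      kSUf m t x = kSUf m τ (fun i => G (x i)) := by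
    intro x hx
    rw [kSUf, kSUf]
    refine findGreatest_congr m (fun j hj => ?_)
    rcases Nat.eq_zero_or_pos j with hj0 | hj0
    · rw [hj0]
      simp
    · have hfil : (univ.filter fun i : Fin m => x i ≤ t j)
          = univ.filter fun i : Fin m => G (x i) ≤ τ j := by
        refine Finset.filter_congr (fun i _ => ?_)
        exact (hGm.le_iff_le (hx i) (ht01 j ⟨hj0, hj⟩)).symm
      rw [hfil]
  have hae : {x : Fin m → ℝ | kSUf m t x = k}
      =ᵐ[Measure.pi fun _ : Fin m => μG]
        ((fun x : Fin m → ℝ => fun i => G (x i)) ⁻¹' {u | kSUf m τ u = k}) := by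
    filter_upwards [hgoodG] with x hx
    rw [eq_iff_iff]
    show kSUf m t x = k ↔ kSUf m τ (fun i => G (x i)) = k
    rw [hcong x hx]
  rw [measure_congr hae, hmpPi.measure_preimage hUmeas.nullMeasurableSet,
    core_unif m k hkm τ hτ0 hτmono hτ01]
  unfold Psi
  rw [ENNReal.toReal_mul, ENNReal.toReal_mul, ENNReal.toReal_pow,
    ENNReal.toReal_ofReal (G_nonneg hG _), ENNReal.toReal_natCast]
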